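/- For 0 < a < 1, for every x ∈ [1, ∞), C_a^n(x) → 1 as n → ∞; hence [1, ∞) is contained in the real basin of attraction of the fixed point 1. -/
import Mathlib

noncomputable def CaR (a : ℝ) (x : ℝ) : ℝ :=
  (42 * x ^ 10 + (-51 * (a + 1)) * x ^ 8 + (4 * (5 * a ^ 2 + 3 * a + 5)) * x ^ 6
      + (-3 * (a ^ 3 - 7 * a ^ 2 - 7 * a + 1)) * x ^ 4
      + (-6 * a * (a ^ 2 + 3 * a + 1)) * x ^ 2 + a ^ 2 * (a + 1))
    / (8 * x ^ 3 * (2 * x ^ 2 - (a + 1)) ^ 3)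

set_option maxHeartbeats 2000000 in
lemma cert1 (s a u : ℝ) (hs : 0 ≤ s) (ha : 0 ≤ a) (hu : 0 ≤ u) :
    0 ≤ (84:ℝ) * s ^ 3 * u ^ 3 + (144:ℝ) * s ^ 3 * a ^ 1 * u ^ 2 + (64:ℝ) * s ^ 3 * a ^ 2 * u ^ 1 + (603:ℝ) * s ^ 4 * u ^ 3 + (1320:ℝ) * s ^ 4 * a ^ 1 * u ^ 2 + (912:ℝ) * s ^ 4 * a ^ 2 * u ^ 1 + (192:ℝ) * s ^ 4 * a ^ 3 + (1752:ℝ) * s ^ 5 * u ^ 3 + (4392:ℝ) * s ^ 5 * a ^ 1 * u ^ 2 + (3600:ℝ) * s ^ 5 * a ^ 2 * u ^ 1 + (960:ℝ) * s ^ 5 * a ^ 3 + (2708:ℝ) * s ^ 6 * u ^ 3 + (7380:ℝ) * s ^ 6 * a ^ 1 * u ^ 2 + (6656:ℝ) * s ^ 6 * a ^ 2 * u ^ 1 + (1984:ℝ) * s ^ 6 * a ^ 3 + (2424:ℝ) * s ^ 7 * u ^ 3 + (6960:ℝ) * s ^ 7 * a ^ 1 * u ^ 2 + (6648:ℝ)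 * s ^ 7 * a ^ 2 * u ^ 1 + (2112:ℝ) * s ^ 7 * a ^ 3 + (1263:ℝ) * s ^ 8 * u ^ 3 + (3738:ℝ) * s ^ 8 * a ^ 1 * u ^ 2 + (3687:ℝ) * s ^ 8 * a ^ 2 * u ^ 1 + (1212:ℝ) * s ^ 8 * a ^ 3 + (356:ℝ) * s ^ 9 * u ^ 3 + (1068:ℝ) * s ^ 9 * a ^ 1 * u ^ 2 + (1068:ℝ) * s ^ 9 * a ^ 2 * u ^ 1 + (356:ℝ) * s ^ 9 * a ^ 3 + (42:ℝ) * s ^ 10 * u ^ 3 + (126:ℝ) * s ^ 10 * a ^ 1 * u ^ 2 + (126:ℝ) * s ^ 10 * a ^ 2 * u ^ 1 + (42:ℝ) * s ^ 10 * a ^ 3 :=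
  (add_nonneg (add_nonneg (add_nonneg (add_nonneg (add_nonneg (add_nonneg (add_nonneg (add_nonneg (add_nonneg (add_nonneg (add_nonneg (add_nonneg (add_nonneg (add_nonneg (add_nonneg (add_nonneg (add_nonneg (add_nonneg (add_nonneg (add_nonneg (add_nonneg (add_nonneg (add_nonneg (add_nonneg (add_nonneg (add_nonneg (add_nonneg (add_nonneg (add_nonneg (add_nonneg (mul_nonneg (mul_nonneg (by norm_num : (0:ℝ) ≤ (84:ℝ)) (pow_nonneg hs 3)) (pow_nonneg hu 3)) (mul_nonneg (mul_nonneg (mul_nonneg (by norm_num : (0:ℝ) ≤ (144:ℝ)) (pow_nonneg hs 3)) (pow_nonneg ha 1)) (pow_nonneg hu 2))) (mul_nonneg (mul_nonneg (mul_nonneg (by norm_num : (0:ℝ) ≤ (64:ℝ)) (pow_nonneg hs 3)) (pow_nonneg ha 2)) (pow_nonneg hu 1))) (mul_nonneg (mul_nonneg (by norm_num : (0:ℝ) ≤ (603:ℝ)) (pow_nonneg hs 4)) (pow_nonneg hu 3))) (mul_nonneg (mul_nonneg (mul_nonneg (by norm_num : (0:ℝ) ≤ (1320:ℝ)) (pow_nonneg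 hs 4)) (pow_nonneg ha 1)) (pow_nonneg hu 2))) (mul_nonneg (mul_nonneg (mul_nonneg (by norm_num : (0:ℝ) ≤ (912:ℝ)) (pow_nonneg hs 4)) (pow_nonneg ha 2)) (pow_nonneg hu 1))) (mul_nonneg (mul_nonneg (by norm_num : (0:ℝ) ≤ (192:ℝ)) (pow_nonneg hs 4)) (pow_nonneg ha 3))) (mul_nonneg (mul_nonneg (by norm_num : (0:ℝ) ≤ (1752:ℝ)) (pow_nonneg hs 5)) (pow_nonneg hu 3))) (mul_nonneg (mul_nonneg (mul_nonneg (by norm_num : (0:ℝ) ≤ (4392:ℝ)) (pow_nonneg hs 5)) (pow_nonneg ha 1)) (pow_nonneg hu 2))) (mul_nonneg (mul_nonneg (mul_nonneg (by norm_num : (0:ℝ) ≤ (3600:ℝ)) (pow_nonneg hs 5)) (pow_nonneg ha 2)) (pow_nonneg hu 1))) (mul_nonneg (mul_nonneg (by norm_num : (0:ℝ) ≤ (960:ℝ)) (pow_nonneg hs 5)) (pow_nonneg ha 3))) (mul_nonneg (mul_nonneg (by norm_num : (0:ℝ) ≤ (2708:ℝ)) (pow_nonneg hs 6)) (pow_nonneg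 hu 3))) (mul_nonneg (mul_nonneg (mul_nonneg (by norm_num : (0:ℝ) ≤ (7380:ℝ)) (pow_nonneg hs 6)) (pow_nonneg ha 1)) (pow_nonneg hu 2))) (mul_nonneg (mul_nonneg (mul_nonneg (by norm_num : (0:ℝ) ≤ (6656:ℝ)) (pow_nonneg hs 6)) (pow_nonneg ha 2)) (pow_nonneg hu 1))) (mul_nonneg (mul_nonneg (by norm_num : (0:ℝ) ≤ (1984:ℝ)) (pow_nonneg hs 6)) (pow_nonneg ha 3))) (mul_nonneg (mul_nonneg (by norm_num : (0:ℝ) ≤ (2424:ℝ)) (pow_nonneg hs 7)) (pow_nonneg hu 3))) (mul_nonneg (mul_nonneg (mul_nonneg (by norm_num : (0:ℝ) ≤ (6960:ℝ)) (pow_nonneg hs 7)) (pow_nonneg ha 1)) (pow_nonneg hu 2))) (mul_nonneg (mul_nonneg (mul_nonneg (by norm_num : (0:ℝ) ≤ (6648:ℝ)) (pow_nonneg hs 7)) (pow_nonneg ha 2)) (pow_nonneg hu 1))) (mul_nonneg (mul_nonneg (by norm_num : (0:ℝ) ≤ (2112:ℝ)) (pow_nonneg hs 7)) (pow_nonneg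 ha 3))) (mul_nonneg (mul_nonneg (by norm_num : (0:ℝ) ≤ (1263:ℝ)) (pow_nonneg hs 8)) (pow_nonneg hu 3))) (mul_nonneg (mul_nonneg (mul_nonneg (by norm_num : (0:ℝ) ≤ (3738:ℝ)) (pow_nonneg hs 8)) (pow_nonneg ha 1)) (pow_nonneg hu 2))) (mul_nonneg (mul_nonneg (mul_nonneg (by norm_num : (0:ℝ) ≤ (3687:ℝ)) (pow_nonneg hs 8)) (pow_nonneg ha 2)) (pow_nonneg hu 1))) (mul_nonneg (mul_nonneg (by norm_num : (0:ℝ) ≤ (1212:ℝ)) (pow_nonneg hs 8)) (pow_nonneg ha 3))) (mul_nonneg (mul_nonneg (by norm_num : (0:ℝ) ≤ (356:ℝ)) (pow_nonneg hs 9)) (pow_nonneg hu 3))) (mul_nonneg (mul_nonneg (mul_nonneg (by norm_num : (0:ℝ) ≤ (1068:ℝ)) (pow_nonneg hs 9)) (pow_nonneg ha 1)) (pow_nonneg hu 2))) (mul_nonneg (mul_nonneg (mul_nonneg (by norm_num : (0:ℝ) ≤ (1068:ℝ)) (pow_nonneg hs 9)) (pow_nonneg ha 2)) (pow_nonneg hu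 1))) (mul_nonneg (mul_nonneg (by norm_num : (0:ℝ) ≤ (356:ℝ)) (pow_nonneg hs 9)) (pow_nonneg ha 3))) (mul_nonneg (mul_nonneg (by norm_num : (0:ℝ) ≤ (42:ℝ)) (pow_nonneg hs 10)) (pow_nonneg hu 3))) (mul_nonneg (mul_nonneg (mul_nonneg (by norm_num : (0:ℝ) ≤ (126:ℝ)) (pow_nonneg hs 10)) (pow_nonneg ha 1)) (pow_nonneg hu 2))) (mul_nonneg (mul_nonneg (mul_nonneg (by norm_num : (0:ℝ) ≤ (126:ℝ)) (pow_nonneg hs 10)) (pow_nonneg ha 2)) (pow_nonneg hu 1))) (mul_nonneg (mul_nonneg (by norm_num : (0:ℝ) ≤ (42:ℝ)) (pow_nonneg hs 10)) (pow_nonneg ha 3)))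

set_option maxHeartbeats 2000000 in
lemma cert2 (s a u : ℝ) (hs : 0 ≤ s) (ha : 0 ≤ a) (hu : 0 ≤ u) :
    0 ≤ (6:ℝ) * s ^ 1 * u ^ 3 + (90:ℝ) * s ^ 2 * u ^ 3 + (72:ℝ) * s ^ 2 * a ^ 1 * u ^ 2 + (474:ℝ) * s ^ 3 * u ^ 3 + (684:ℝ) * s ^ 3 * a ^ 1 * u ^ 2 + (224:ℝ) * s ^ 3 * a ^ 2 * u ^ 1 + (1263:ℝ) * s ^ 4 * u ^ 3 + (2460:ℝ) * s ^ 4 * a ^ 1 * u ^ 2 + (1392:ℝ) * s ^ 4 * a ^ 2 * u ^ 1 + (192:ℝ) * s ^ 4 * a ^ 3 + (1956:ℝ) * s ^ 5 * u ^ 3 + (4572:ℝ) * s ^ 5 * a ^ 1 * u ^ 2 + (3384:ℝ) * s ^ 5 * a ^ 2 * u ^ 1 + (768:ℝ) * s ^ 5 * a ^ 3 + (1864:ℝ) * s ^ 6 * u ^ 3 + (4896:ℝ) * s ^ 6 * a ^ 1 * u ^ 2 + (4216:ℝ) * s ^ 6 * a ^ 2 * u ^ 1 + (1184:ℝ) *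 s ^ 6 * a ^ 3 + (1104:ℝ) * s ^ 7 * u ^ 3 + (3120:ℝ) * s ^ 7 * a ^ 1 * u ^ 2 + (2928:ℝ) * s ^ 7 * a ^ 2 * u ^ 1 + (912:ℝ) * s ^ 7 * a ^ 3 + (393:ℝ) * s ^ 8 * u ^ 3 + (1158:ℝ) * s ^ 8 * a ^ 1 * u ^ 2 + (1137:ℝ) * s ^ 8 * a ^ 2 * u ^ 1 + (372:ℝ) * s ^ 8 * a ^ 3 + (76:ℝ) * s ^ 9 * u ^ 3 + (228:ℝ) * s ^ 9 * a ^ 1 * u ^ 2 + (228:ℝ) * s ^ 9 * a ^ 2 * u ^ 1 + (76:ℝ) * s ^ 9 * a ^ 3 + (6:ℝ) * s ^ 10 * u ^ 3 + (18:ℝ) * s ^ 10 * a ^ 1 * u ^ 2 + (18:ℝ) * s ^ 10 * a ^ 2 * u ^ 1 + (6:ℝ) * s ^ 10 * a ^ 3 :=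
  (add_nonneg (add_nonneg (add_nonneg (add_nonneg (add_nonneg (add_nonneg (add_nonneg (add_nonneg (add_nonneg (add_nonneg (add_nonneg (add_nonneg (add_nonneg (add_nonneg (add_nonneg (add_nonneg (add_nonneg (add_nonneg (add_nonneg (add_nonneg (add_nonneg (add_nonneg (add_nonneg (add_nonneg (add_nonneg (add_nonneg (add_nonneg (add_nonneg (add_nonneg (add_nonneg (add_nonneg (add_nonneg (add_nonneg (mul_nonneg (mul_nonneg (by norm_num : (0:ℝ) ≤ (6:ℝ)) (pow_nonneg hs 1)) (pow_nonneg hu 3)) (mul_nonneg (mul_nonneg (by norm_num : (0:ℝ) ≤ (90:ℝ)) (pow_nonneg hs 2)) (pow_nonneg hu 3))) (mul_nonneg (mul_nonneg (mul_nonneg (by norm_num : (0:ℝ) ≤ (72:ℝ)) (pow_nonneg hs 2)) (pow_nonneg ha 1)) (pow_nonneg hu 2))) (mul_nonneg (mul_nonneg (by norm_num : (0:ℝ) ≤ (474:ℝ)) (pow_nonneg hs 3)) (pow_nonneg hu 3))) (mul_nonneg (mul_nonneg (mul_nonneg (by norm_num : (0:ℝ) ≤ (684:ℝ)) (pow_nonneg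 hs 3)) (pow_nonneg ha 1)) (pow_nonneg hu 2))) (mul_nonneg (mul_nonneg (mul_nonneg (by norm_num : (0:ℝ) ≤ (224:ℝ)) (pow_nonneg hs 3)) (pow_nonneg ha 2)) (pow_nonneg hu 1))) (mul_nonneg (mul_nonneg (by norm_num : (0:ℝ) ≤ (1263:ℝ)) (pow_nonneg hs 4)) (pow_nonneg hu 3))) (mul_nonneg (mul_nonneg (mul_nonneg (by norm_num : (0:ℝ) ≤ (2460:ℝ)) (pow_nonneg hs 4)) (pow_nonneg ha 1)) (pow_nonneg hu 2))) (mul_nonneg (mul_nonneg (mul_nonneg (by norm_num : (0:ℝ) ≤ (1392:ℝ)) (pow_nonneg hs 4)) (pow_nonneg ha 2)) (pow_nonneg hu 1))) (mul_nonneg (mul_nonneg (by norm_num : (0:ℝ) ≤ (192:ℝ)) (pow_nonneg hs 4)) (pow_nonneg ha 3))) (mul_nonneg (mul_nonneg (by norm_num : (0:ℝ) ≤ (1956:ℝ)) (pow_nonneg hs 5)) (pow_nonneg hu 3))) (mul_nonneg (mul_nonneg (mul_nonneg (by norm_num : (0:ℝ) ≤ (4572:ℝ)) (pow_nonneg hs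 5)) (pow_nonneg ha 1)) (pow_nonneg hu 2))) (mul_nonneg (mul_nonneg (mul_nonneg (by norm_num : (0:ℝ) ≤ (3384:ℝ)) (pow_nonneg hs 5)) (pow_nonneg ha 2)) (pow_nonneg hu 1))) (mul_nonneg (mul_nonneg (by norm_num : (0:ℝ) ≤ (768:ℝ)) (pow_nonneg hs 5)) (pow_nonneg ha 3))) (mul_nonneg (mul_nonneg (by norm_num : (0:ℝ) ≤ (1864:ℝ)) (pow_nonneg hs 6)) (pow_nonneg hu 3))) (mul_nonneg (mul_nonneg (mul_nonneg (by norm_num : (0:ℝ) ≤ (4896:ℝ)) (pow_nonneg hs 6)) (pow_nonneg ha 1)) (pow_nonneg hu 2))) (mul_nonneg (mul_nonneg (mul_nonneg (by norm_num : (0:ℝ) ≤ (4216:ℝ)) (pow_nonneg hs 6)) (pow_nonneg ha 2)) (pow_nonneg hu 1))) (mul_nonneg (mul_nonneg (by norm_num : (0:ℝ) ≤ (1184:ℝ)) (pow_nonneg hs 6)) (pow_nonneg ha 3))) (mul_nonneg (mul_nonneg (by norm_num : (0:ℝ) ≤ (1104:ℝ)) (pow_nonneg hs 7)) (pow_nonneg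 hu 3))) (mul_nonneg (mul_nonneg (mul_nonneg (by norm_num : (0:ℝ) ≤ (3120:ℝ)) (pow_nonneg hs 7)) (pow_nonneg ha 1)) (pow_nonneg hu 2))) (mul_nonneg (mul_nonneg (mul_nonneg (by norm_num : (0:ℝ) ≤ (2928:ℝ)) (pow_nonneg hs 7)) (pow_nonneg ha 2)) (pow_nonneg hu 1))) (mul_nonneg (mul_nonneg (by norm_num : (0:ℝ) ≤ (912:ℝ)) (pow_nonneg hs 7)) (pow_nonneg ha 3))) (mul_nonneg (mul_nonneg (by norm_num : (0:ℝ) ≤ (393:ℝ)) (pow_nonneg hs 8)) (pow_nonneg hu 3))) (mul_nonneg (mul_nonneg (mul_nonneg (by norm_num : (0:ℝ) ≤ (1158:ℝ)) (pow_nonneg hs 8)) (pow_nonneg ha 1)) (pow_nonneg hu 2))) (mul_nonneg (mul_nonneg (mul_nonneg (by norm_num : (0:ℝ) ≤ (1137:ℝ)) (pow_nonneg hs 8)) (pow_nonneg ha 2)) (pow_nonneg hu 1))) (mul_nonneg (mul_nonneg (by norm_num : (0:ℝ) ≤ (372:ℝ)) (pow_nonneg hs 8)) (pow_nonneg ha 3)))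 (mul_nonneg (mul_nonneg (by norm_num : (0:ℝ) ≤ (76:ℝ)) (pow_nonneg hs 9)) (pow_nonneg hu 3))) (mul_nonneg (mul_nonneg (mul_nonneg (by norm_num : (0:ℝ) ≤ (228:ℝ)) (pow_nonneg hs 9)) (pow_nonneg ha 1)) (pow_nonneg hu 2))) (mul_nonneg (mul_nonneg (mul_nonneg (by norm_num : (0:ℝ) ≤ (228:ℝ)) (pow_nonneg hs 9)) (pow_nonneg ha 2)) (pow_nonneg hu 1))) (mul_nonneg (mul_nonneg (by norm_num : (0:ℝ) ≤ (76:ℝ)) (pow_nonneg hs 9)) (pow_nonneg ha 3))) (mul_nonneg (mul_nonneg (by norm_num : (0:ℝ) ≤ (6:ℝ)) (pow_nonneg hs 10)) (pow_nonneg hu 3))) (mul_nonneg (mul_nonneg (mul_nonneg (by norm_num : (0:ℝ) ≤ (18:ℝ)) (pow_nonneg hs 10)) (pow_nonneg ha 1)) (pow_nonneg hu 2))) (mul_nonneg (mul_nonneg (mul_nonneg (by norm_num : (0:ℝ) ≤ (18:ℝ)) (pow_nonneg hs 10)) (pow_nonneg ha 2)) (pow_nonneg hu 1))) (mul_nonneg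 (mul_nonneg (by norm_num : (0:ℝ) ≤ (6:ℝ)) (pow_nonneg hs 10)) (pow_nonneg ha 3)))

set_option maxHeartbeats 1000000 in
lemma CaR_bounds (a x : ℝ) (ha0 : 0 < a) (ha1 : a < 1) (hx : 1 ≤ x) :
    1 ≤ CaR a x ∧ CaR a x - 1 ≤ 3 / 4 * (x - 1) := by
  have hx0 : (0:ℝ) < x := lt_of_lt_of_le one_pos hx
  have ht : (0:ℝ) < 2 * x ^ 2 - (a + 1) := by nlinarith
  have hD : (0:ℝ) < 8 * x ^ 3 * (2 * x ^ 2 - (a + 1)) ^ 3 := by positivity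
  have h1 := cert1 (x - 1) a (1 - a) (by linarith) ha0.le (by linarith)
  have h2 := cert2 (x - 1) a (1 - a) (by linarith) ha0.le (by linarith)
  have e1 : (fun s u => (84:ℝ) * s ^ 3 * u ^ 3 + (144:ℝ) * s ^ 3 * a ^ 1 * u ^ 2 + (64:ℝ) * s ^ 3 * a ^ 2 * u ^ 1 + (603:ℝ) * s ^ 4 * u ^ 3 + (1320:ℝ) * s ^ 4 * a ^ 1 * u ^ 2 + (912:ℝ) * s ^ 4 * a ^ 2 * u ^ 1 + (192:ℝ) * s ^ 4 * a ^ 3 + (1752:ℝ) * s ^ 5 * u ^ 3 + (4392:ℝ) * s ^ 5 * a ^ 1 * u ^ 2 + (3600:ℝ) * s ^ 5 * a ^ 2 * u ^ 1 + (960:ℝ) * s ^ 5 * a ^ 3 + (2708:ℝ) * s ^ 6 * u ^ 3 + (7380:ℝ) * s ^ 6 * a ^ 1 * u ^ 2 + (6656:ℝ) * s ^ 6 * a ^ 2 * u ^ 1 + (1984:ℝ) * s ^ 6 * a ^ 3 + (2424:ℝ) * s ^ 7 * u ^ 3 + (6960:ℝ) * s ^ 7 * a ^ 1 * u ^ 2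 + (6648:ℝ) * s ^ 7 * a ^ 2 * u ^ 1 + (2112:ℝ) * s ^ 7 * a ^ 3 + (1263:ℝ) * s ^ 8 * u ^ 3 + (3738:ℝ) * s ^ 8 * a ^ 1 * u ^ 2 + (3687:ℝ) * s ^ 8 * a ^ 2 * u ^ 1 + (1212:ℝ) * s ^ 8 * a ^ 3 + (356:ℝ) * s ^ 9 * u ^ 3 + (1068:ℝ) * s ^ 9 * a ^ 1 * u ^ 2 + (1068:ℝ) * s ^ 9 * a ^ 2 * u ^ 1 + (356:ℝ) * s ^ 9 * a ^ 3 + (42:ℝ) * s ^ 10 * u ^ 3 + (126:ℝ) * s ^ 10 * a ^ 1 * u ^ 2 + (126:ℝ) * s ^ 10 * a ^ 2 * u ^ 1 + (42:ℝ) * s ^ 10 * a ^ 3) (x - 1) (1 - a)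
      = (42 * x ^ 10 + (-51 * (a + 1)) * x ^ 8 + (4 * (5 * a ^ 2 + 3 * a + 5)) * x ^ 6
      + (-3 * (a ^ 3 - 7 * a ^ 2 - 7 * a + 1)) * x ^ 4
      + (-6 * a * (a ^ 2 + 3 * a + 1)) * x ^ 2 + a ^ 2 * (a + 1))
      - 8 * x ^ 3 * (2 * x ^ 2 - (a + 1)) ^ 3 := by ring
  have e2 : (fun s u => (6:ℝ) * s ^ 1 * u ^ 3 + (90:ℝ) * s ^ 2 * u ^ 3 + (72:ℝ) * s ^ 2 * a ^ 1 * u ^ 2 + (474:ℝ) * s ^ 3 * u ^ 3 + (684:ℝ) * s ^ 3 * a ^ 1 * u ^ 2 + (224:ℝ) * s ^ 3 * a ^ 2 * u ^ 1 + (1263:ℝ) * s ^ 4 * u ^ 3 + (2460:ℝ) * s ^ 4 * a ^ 1 * u ^ 2 + (1392:ℝ) * s ^ 4 * a ^ 2 * u ^ 1 + (192:ℝ) * s ^ 4 * a ^ 3 + (1956:ℝ) * s ^ 5 * u ^ 3 + (4572:ℝ) * s ^ 5 * a ^ 1 * u ^ 2 + (3384:ℝ) * s ^ 5 * a ^ 2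 * u ^ 1 + (768:ℝ) * s ^ 5 * a ^ 3 + (1864:ℝ) * s ^ 6 * u ^ 3 + (4896:ℝ) * s ^ 6 * a ^ 1 * u ^ 2 + (4216:ℝ) * s ^ 6 * a ^ 2 * u ^ 1 + (1184:ℝ) * s ^ 6 * a ^ 3 + (1104:ℝ) * s ^ 7 * u ^ 3 + (3120:ℝ) * s ^ 7 * a ^ 1 * u ^ 2 + (2928:ℝ) * s ^ 7 * a ^ 2 * u ^ 1 + (912:ℝ) * s ^ 7 * a ^ 3 + (393:ℝ) * s ^ 8 * u ^ 3 + (1158:ℝ) * s ^ 8 * a ^ 1 * u ^ 2 + (1137:ℝ) * s ^ 8 * a ^ 2 * u ^ 1 + (372:ℝ) * s ^ 8 * a ^ 3 + (76:ℝ) * s ^ 9 * u ^ 3 + (228:ℝ) * s ^ 9 * a ^ 1 * u ^ 2 + (228:ℝ) * s ^ 9 * a ^ 2 * u ^ 1 + (76:ℝ) * s ^ 9 * a ^ 3 + (6:ℝ) * s ^ 10 * u ^ 3 + (18:ℝ) * s ^ 10 * a ^ 1 * u ^ 2 + (18:ℝ) * s ^ 10 * a ^ 2 * u ^ 1 + (6:ℝ)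 * s ^ 10 * a ^ 3) (x - 1) (1 - a)
      = (1 + 3 / 4 * (x - 1)) * (8 * x ^ 3 * (2 * x ^ 2 - (a + 1)) ^ 3)
      - (42 * x ^ 10 + (-51 * (a + 1)) * x ^ 8 + (4 * (5 * a ^ 2 + 3 * a + 5)) * x ^ 6
      + (-3 * (a ^ 3 - 7 * a ^ 2 - 7 * a + 1)) * x ^ 4
      + (-6 * a * (a ^ 2 + 3 * a + 1)) * x ^ 2 + a ^ 2 * (a + 1)) := by ring
  simp only at e1 e2
  rw [e1] at h1
  rw [e2] at h2
  constructor
  · rw [CaR, le_div_iff₀ hD]; linarith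
  · have : CaR a x ≤ 1 + 3 / 4 * (x - 1) := by
      rw [CaR, div_le_iff₀ hD]; linarith
    linarith

/-- For `0 < a < 1`, every `x ∈ [1,∞)` converges to `1` under iteration of `C_a`. -/
theorem stmt15 (a : ℝ) (ha0 : 0 < a) (ha1 : a < 1) (x : ℝ) (hx : 1 ≤ x) :
    Filter.Tendsto (fun n : ℕ => (CaR a)^[n] x) Filter.atTop (nhds 1) := by
  have key : ∀ n : ℕ, 1 ≤ (CaR a)^[n] x ∧ (CaR a)^[n] x - 1 ≤ (3/4 : ℝ) ^ n * (x - 1) := by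
    intro n
    induction n with
    | zero => exact ⟨hx, by simp⟩
    | succ n ih =>
      have hb := CaR_bounds a _ ha0 ha1 ih.1
      rw [Function.iterate_succ_apply']
      refine ⟨hb.1, ?_⟩
      calc CaR a ((CaR a)^[n] x) - 1 ≤ 3 / 4 * ((CaR a)^[n] x - 1) := hb.2
        _ ≤ 3 / 4 * ((3/4 : ℝ) ^ n * (x - 1)) := by
            have := ih.2; nlinarith
        _ = (3/4 : ℝ) ^ (n + 1) * (x - 1) := by ring
  have h0 : Filter.Tendsto (fun n : ℕ => ((3:ℝ)/4) ^ n * (x - 1)) Filter.atTop (nhds 0) := by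
    have := tendsto_pow_atTop_nhds_zero_of_lt_one (by norm_num : (0:ℝ) ≤ 3/4) (by norm_num : (3:ℝ)/4 < 1)
    simpa using this.mul_const (x - 1)
  have hsq : Filter.Tendsto (fun n : ℕ => (CaR a)^[n] x - 1) Filter.atTop (nhds 0) := by
    apply squeeze_zero (fun n => by linarith [(key n).1]) (fun n => (key n).2) h0
  have := hsq.add (tendsto_const_nhds (x := (1:ℝ)))
  simpa using this
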